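/- For every function s : ℕ → ℝ with s(n) ≥ 1 for all n and such that s(n)·n/2^n → 0 as n → ∞, the fraction of Boolean functions on n variables computable by some Boolean circuit on n inputs over the basis {AND, OR, NOT} with at most s(n) gates tends to 0 as n → ∞. Equivalently, it is impossible for a fixed positive fraction of Boolean functions on n inputs to be computable by circuits of size o(2^n/n). -/

import Mathlib

/-- A wire in a straight-line Boolean circuit: either one of the `n` input
variables or the output of one of the `k` previous gates. -/
inductive Wire (n k : ℕ) : Type where
  | input : Fin n → Wire n k
  | gate  : Fin k → Wire n k

/-- A gate over the basis {AND, OR, NOT}, with inputs taken from wires. -/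
inductive GateDesc (n k : ℕ) : Type where
  | not : Wire n k → GateDesc n k
  | and : Wire n k → Wire n k → GateDesc n k
  | or  : Wire n k → Wire n k → GateDesc n k

/-- A Boolean circuit on `n` inputs over {AND, OR, NOT}: a straight-line
program in which gate `i` may reference the inputs and gates `j < i`.
Its size is the number of gates. -/
structure Circuit (n : ℕ) : Type where
  size : ℕ
  gates : (i : Fin size) → GateDesc n i

def Wire.eval {n k : ℕ} (x : Fin n → Bool) (g : Fin k → Bool) : Wire n k → Bool
  | .input j => x j
  | .gate j => g j

def GateDesc.eval {n k : ℕ} (x : Fin n → Bool) (g : Fin k → Bool) : GateDesc n k → Bool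
  | .not w => !(w.eval x g)
  | .and w₁ w₂ => w₁.eval x g && w₂.eval x g
  | .or w₁ w₂ => w₁.eval x g || w₂.eval x g

/-- Value of gate `i` of the circuit on input `x`. -/
def Circuit.evalGate {n : ℕ} (c : Circuit n) (x : Fin n → Bool) : (i : ℕ) → i < c.size → Bool
  | i, hi => (c.gates ⟨i, hi⟩).eval x (fun j => c.evalGate x j (j.isLt.trans hi))

/-- The circuit `c` computes the Boolean function `f` if it has at least one
gate and the value of the last gate on every input `x` equals `f x`. -/
def Circuit.Computes {n : ℕ} (c : Circuit n) (f : (Fin n → Bool) → Bool) : Prop :=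
  ∃ h : 0 < c.size, ∀ x : Fin n → Bool,
    c.evalGate x (c.size - 1) (Nat.sub_lt h Nat.one_pos) = f x

-- auxiliary
def wireEquiv (n k : ℕ) : Wire n k ≃ (Fin n ⊕ Fin k) where
  toFun w := match w with
    | .input j => Sum.inl j
    | .gate j => Sum.inr j
  invFun w := match w with
    | Sum.inl j => .input j
    | Sum.inr j => .gate j
  left_inv w := by cases w <;> rfl
  right_inv w := by cases w <;> rfl

def gateEquiv (n k : ℕ) :
    GateDesc n k ≃ (Wire n k ⊕ (Wire n k × Wire n k) ⊕ (Wire n k × Wire n k)) where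
  toFun g := match g with
    | .not w => Sum.inl w
    | .and a b => Sum.inr (Sum.inl (a, b))
    | .or a b => Sum.inr (Sum.inr (a, b))
  invFun g := match g with
    | Sum.inl w => .not w
    | Sum.inr (Sum.inl (a, b)) => .and a b
    | Sum.inr (Sum.inr (a, b)) => .or a b
  left_inv g := by cases g <;> rfl
  right_inv g := by rcases g with w | ⟨a, b⟩ | ⟨a, b⟩ <;> rfl

instance (n k : ℕ) : Fintype (Wire n k) := Fintype.ofEquiv _ (wireEquiv n k).symm
instance (n k : ℕ) : Fintype (GateDesc n k) := Fintype.ofEquiv _ (gateEquiv n k).symm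

lemma card_wire (n k : ℕ) : Fintype.card (Wire n k) = n + k := by
  rw [Fintype.card_congr (wireEquiv n k)]; simp

lemma card_gateDesc (n k : ℕ) :
    Fintype.card (GateDesc n k) = (n + k) + ((n + k) * (n + k) + (n + k) * (n + k)) := by
  rw [Fintype.card_congr (gateEquiv n k)]
  simp [card_wire]

lemma card_le_bound (n m : ℕ) :
    Nat.card {f : (Fin n → Bool) → Bool | ∃ C : Circuit n, C.size ≤ m ∧ C.Computes f}
      ≤ (m + 1) * (3 * (n + m + 1) ^ 2) ^ m := by
  classical
  set G : (Σ sz : Fin (m + 1), ((i : Fin (sz : ℕ)) → GateDesc n i)) → ((Fin n → Bool) → Bool) := fun t => fun x =>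
    if h : 0 < (Circuit.mk (n := n) (t.1 : ℕ) t.2).size then
      (Circuit.mk (n := n) (t.1 : ℕ) t.2).evalGate x ((t.1 : ℕ) - 1) (Nat.sub_lt h Nat.one_pos)
    else false with hG
  have hsub : {f : (Fin n → Bool) → Bool | ∃ C : Circuit n, C.size ≤ m ∧ C.Computes f}
      ⊆ Set.range G := by
    rintro f ⟨C, hCm, hpos, hC⟩
    refine ⟨⟨⟨C.size, by omega⟩, C.gates⟩, ?_⟩
    funext x
    simp only [hG]
    rw [dif_pos hpos]
    exact hC x
  calc Nat.card {f : (Fin n → Bool) → Bool | ∃ C : Circuit n, C.size ≤ m ∧ C.Computes f}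
      ≤ Nat.card (Set.range G) := Nat.card_mono (Set.toFinite _) hsub
    _ ≤ Nat.card (Σ sz : Fin (m + 1), ((i : Fin (sz : ℕ)) → GateDesc n i)) :=
        Nat.card_le_card_of_surjective (Set.rangeFactorization G) Set.rangeFactorization_surjective
    _ = Fintype.card (Σ sz : Fin (m + 1), ((i : Fin (sz : ℕ)) → GateDesc n i)) :=
        Nat.card_eq_fintype_card
    _ ≤ (m + 1) * (3 * (n + m + 1) ^ 2) ^ m := by
        rw [Fintype.card_sigma]
        have hbound : ∀ sz : Fin (m + 1),
            Fintype.card ((i : Fin (sz : ℕ)) → GateDesc n i) ≤ (3 * (n + m + 1) ^ 2) ^ m := by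
          intro sz
          rw [Fintype.card_pi]
          calc ∏ i : Fin (sz : ℕ), Fintype.card (GateDesc n i)
              ≤ (3 * (n + m + 1) ^ 2) ^ (Finset.univ : Finset (Fin (sz : ℕ))).card := by
                apply Finset.prod_le_pow_card
                intro i _
                rw [card_gateDesc]
                have hi : (i : ℕ) ≤ m := by omega
                nlinarith [hi]
            _ ≤ (3 * (n + m + 1) ^ 2) ^ m := by
                apply Nat.pow_le_pow_right (by positivity)
                simpa using Nat.lt_succ_iff.mp sz.isLt
        calc (∑ sz : Fin (m + 1), Fintype.card ((i : Fin (sz : ℕ)) → GateDesc n i))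
            ≤ ∑ _sz : Fin (m + 1), (3 * (n + m + 1) ^ 2) ^ m :=
              Finset.sum_le_sum fun i _ => hbound i
          _ = (m + 1) * (3 * (n + m + 1) ^ 2) ^ m := by simp [mul_comm]

lemma nat_bound (n m : ℕ) (hn : 1 ≤ n) (hm : 1 ≤ m) (h2 : m ≤ 2 ^ n) :
    (m + 1) * (3 * (n + m + 1) ^ 2) ^ m ≤ 2 ^ (9 * m * n) := by
  have hn2 : n ≤ 2 ^ n := Nat.le_of_lt (Nat.lt_two_pow_self (n := n))
  have h1 : n + m + 1 ≤ 2 ^ (n + 2) := by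
    have : (1 : ℕ) ≤ 2 ^ n := Nat.one_le_two_pow
    calc n + m + 1 ≤ 2 ^ n + 2 ^ n + 2 ^ n := by omega
      _ ≤ 2 ^ (n + 2) := by ring_nf; omega
  have h3 : 3 * (n + m + 1) ^ 2 ≤ 2 ^ (8 * n) := by
    calc 3 * (n + m + 1) ^ 2 ≤ 3 * (2 ^ (n + 2)) ^ 2 := by
          exact Nat.mul_le_mul_left 3 (Nat.pow_le_pow_left h1 2)
      _ ≤ 4 * (2 ^ (n + 2)) ^ 2 := by nlinarith
      _ = 2 ^ (2 * n + 6) := by ring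
      _ ≤ 2 ^ (8 * n) := Nat.pow_le_pow_right (by norm_num) (by omega)
  have h4 : m + 1 ≤ 2 ^ (m * n) := by
    calc m + 1 ≤ 2 ^ m := Nat.lt_two_pow_self (n := m)
      _ ≤ 2 ^ (m * n) := Nat.pow_le_pow_right (by norm_num) (Nat.le_mul_of_pos_right m hn)
  calc (m + 1) * (3 * (n + m + 1) ^ 2) ^ m
      ≤ 2 ^ (m * n) * (2 ^ (8 * n)) ^ m :=
        Nat.mul_le_mul h4 (Nat.pow_le_pow_left h3 m)
    _ = 2 ^ (m * n + 8 * n * m) := by rw [← pow_mul, ← pow_add]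
    _ = 2 ^ (9 * m * n) := by ring_nf

theorem stmt_14 (s : ℕ → ℝ) (hs : ∀ n, 1 ≤ s n)
    (h : Filter.Tendsto (fun n : ℕ => s n * n / 2 ^ n) Filter.atTop (nhds 0)) :
    Filter.Tendsto
      (fun n : ℕ =>
        (Nat.card {f : (Fin n → Bool) → Bool |
            ∃ C : Circuit n, (C.size : ℝ) ≤ s n ∧ C.Computes f} : ℝ) / 2 ^ (2 ^ n))
      Filter.atTop (nhds 0) := by
  have h2 : ∀ n : ℕ, (0:ℝ) < 2 ^ n := fun n => by positivity
  -- the dominating function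
  set g : ℕ → ℝ := fun n => (2 : ℝ) ^ (9 * (s n * n) - 2 ^ n) with hg
  have hgto : Filter.Tendsto g Filter.atTop (nhds 0) := by
    have he : Filter.Tendsto (fun n : ℕ => 9 * (s n * n) - 2 ^ n) Filter.atTop Filter.atBot := by
      have heq : (fun n : ℕ => 9 * (s n * n) - 2 ^ n)
          = fun n : ℕ => (2:ℝ) ^ n * (9 * (s n * n / 2 ^ n) - 1) := by
        funext n
        have := (h2 n).ne'
        field_simp
      rw [heq]
      exact Filter.Tendsto.atTop_mul_neg (by norm_num : (9:ℝ) * 0 - 1 < 0)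
        (tendsto_pow_atTop_atTop_of_one_lt (by norm_num : (1:ℝ) < 2))
        (((h.const_mul 9).sub_const 1))
    exact (tendsto_rpow_atBot_of_base_gt_one 2 (by norm_num)).comp he
  apply squeeze_zero' (g := g)
  · filter_upwards with n
    positivity
  · have h1 : ∀ᶠ n : ℕ in Filter.atTop, s n * n / 2 ^ n ≤ 1 :=
      h.eventually (eventually_le_nhds (by norm_num : (0:ℝ) < 1))
    filter_upwards [h1, Filter.eventually_ge_atTop 1] with n hratio hn1
    set m := ⌊s n⌋₊ with hm
    have hs0 : (0:ℝ) ≤ s n := le_trans zero_le_one (hs n)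
    have hmle : (m : ℝ) ≤ s n := Nat.floor_le hs0
    have hm1 : 1 ≤ m := Nat.le_floor (by exact_mod_cast hs n)
    have hsn2 : s n * n ≤ 2 ^ n := (div_le_one (h2 n)).mp hratio
    have hsle : s n ≤ 2 ^ n := by
      calc s n = s n * 1 := (mul_one _).symm
        _ ≤ s n * n := by
            apply mul_le_mul_of_nonneg_left _ hs0
            exact_mod_cast hn1
        _ ≤ 2 ^ n := hsn2
    have hm2 : m ≤ 2 ^ n := by
      have : (m:ℝ) ≤ ((2 ^ n : ℕ) : ℝ) := by push_cast; linarith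
      exact_mod_cast this
    -- rewrite the set condition
    have hset : {f : (Fin n → Bool) → Bool | ∃ C : Circuit n, (C.size : ℝ) ≤ s n ∧ C.Computes f}
        = {f : (Fin n → Bool) → Bool | ∃ C : Circuit n, C.size ≤ m ∧ C.Computes f} := by
      ext f
      simp only [Set.mem_setOf_eq]
      constructor
      · rintro ⟨C, hC1, hC2⟩; exact ⟨C, Nat.le_floor hC1, hC2⟩
      · rintro ⟨C, hC1, hC2⟩
        exact ⟨C, le_trans (by exact_mod_cast hC1) hmle, hC2⟩
    rw [hset]
    have hcard : Nat.card {f : (Fin n → Bool) → Bool | ∃ C : Circuit n, C.size ≤ m ∧ C.Computes f}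
        ≤ 2 ^ (9 * m * n) := le_trans (card_le_bound n m) (nat_bound n m hn1 hm1 hm2)
    have hstep : (Nat.card {f : (Fin n → Bool) → Bool |
        ∃ C : Circuit n, C.size ≤ m ∧ C.Computes f} : ℝ) ≤ (2:ℝ) ^ (9 * (s n * n)) := by
      calc (Nat.card {f : (Fin n → Bool) → Bool |
            ∃ C : Circuit n, C.size ≤ m ∧ C.Computes f} : ℝ)
          ≤ ((2 ^ (9 * m * n) : ℕ) : ℝ) := by exact_mod_cast hcard
        _ = (2:ℝ) ^ ((9 * m * n : ℕ) : ℝ) := by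
            rw [Real.rpow_natCast]; push_cast; ring
        _ ≤ (2:ℝ) ^ (9 * (s n * n)) := by
            apply Real.rpow_le_rpow_of_exponent_le one_le_two
            push_cast
            have hn0 : (0:ℝ) ≤ (n:ℝ) := Nat.cast_nonneg n
            nlinarith
    have hden : ((2:ℝ) ^ (2 ^ n : ℕ)) = (2:ℝ) ^ (((2:ℝ)) ^ n) := by
      rw [← Real.rpow_natCast 2 (2 ^ n)]
      push_cast
      ring_nf
    rw [div_le_iff₀ (by positivity)]
    calc (Nat.card {f : (Fin n → Bool) → Bool |
          ∃ C : Circuit n, C.size ≤ m ∧ C.Computes f} : ℝ)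
        ≤ (2:ℝ) ^ (9 * (s n * n)) := hstep
      _ = g n * 2 ^ (2 ^ n : ℕ) := by
          rw [hg, hden, ← Real.rpow_add (by norm_num)]
          ring_nf
  · exact hgto
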